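/- Let T > 0 and α > 1/2. Let (X_t)_{t∈[0,T]} be a jointly measurable real-valued stochastic process whose sample paths are almost surely α-Hölder continuous and which satisfies the bounded-density assumption with some nonnegative g ∈ L¹([0,T]). Let h : ℝ → ℝ be left-continuous and of locally bounded variation, and set F(x) := ∫₀^x h(y) dy. Then for every sequence (π_n) of tagged partitions of [0,T] with mesh |π_n| → 0, the Riemann–Stieltjes sums Σ_{i=1}^{k(n)} h(X_{τ_i^n}) (X_{t_i^n} − X_{t_{i−1}^n}) converge almost surely to F(X_T) − F(X_0); that is, the Itô formula F(X_T) = F(X_0) + ∫₀^T h(X_s) dX_s holds with the pathwise stochastic integral understood as the almost sure limit of Riemann–Stieltjes sums. -/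

import Mathlib

open MeasureTheory Set Filter intervalIntegral
open scoped ENNReal

noncomputable section

/-- `x` is `α`-Hölder continuous on `[0,T]`. -/
def HolderOnIcc (α T : ℝ) (x : ℝ → ℝ) : Prop :=
  ∃ C : ℝ, ∀ s ∈ Set.Icc (0:ℝ) T, ∀ t ∈ Set.Icc (0:ℝ) T, |x t - x s| ≤ C * |t - s| ^ α

/-- The bounded-density assumption: for a.e. `t ∈ [0,T]`, the law of `X_t` is bounded above by
`g t` times Lebesgue measure. -/
def BoundedDensityAssumption {Ω : Type*} [MeasurableSpace Ω] (P : Measure Ω)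
    (T : ℝ) (X : ℝ → Ω → ℝ) (g : ℝ → ℝ) : Prop :=
  ∀ᵐ t ∂(volume.restrict (Set.Icc (0:ℝ) T)),
    ∀ A : Set ℝ, MeasurableSet A → P {ω | X t ω ∈ A} ≤ ENNReal.ofReal (g t) * volume A

/-- A tagged partition `0 = t_0 < t_1 < … < t_k = T` of `[0,T]` with tags
`τ_i ∈ [t_{i-1}, t_i]`. -/
structure TaggedPartition (T : ℝ) where
  k : ℕ
  hk : 0 < k
  t : ℕ → ℝ
  tag : ℕ → ℝ
  h0 : t 0 = 0
  hT : t k = T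
  mono : ∀ i, i < k → t i < t (i + 1)
  tagmem : ∀ i, i < k → tag i ∈ Set.Icc (t i) (t (i + 1))

/-- The mesh `|π| = max_i (t_i - t_{i-1})` of a tagged partition. -/
def TaggedPartition.mesh {T : ℝ} (π : TaggedPartition T) : ℝ :=
  (Finset.range π.k).sup' (Finset.nonempty_range_iff.mpr π.hk.ne')
    (fun i => π.t (i + 1) - π.t i)

/-- The Riemann–Stieltjes sum `Σ_i Z(τ_i) (Y(t_i) - Y(t_{i-1}))` along a tagged partition. -/
def TaggedPartition.rsSum {T : ℝ} (π : TaggedPartition T) (Z Y : ℝ → ℝ) : ℝ :=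
  ∑ i ∈ Finset.range π.k, Z (π.tag i) * (Y (π.t (i + 1)) - Y (π.t i))

set_option maxHeartbeats 1000000

namespace ItoAux

/-- dyadic mesh scale -/
def Dm (T : ℝ) (m : ℕ) : ℝ := T * (1 / 2) ^ m

/-- variation bound functional -/
def Vv (p q : ℝ → ℝ) (l u : ℝ) : ℝ := (p u - p l) + (q u - q l)

/-- radius -/
def rr (K T α : ℝ) (m : ℕ) : ℝ := 2 * K * Dm T m ^ α

def psi (p q : ℝ → ℝ) (K T α R : ℝ) (m : ℕ) (x : ℝ) : ℝ≥0∞ :=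
  (Set.Icc (-R) R).indicator
    (fun y => ENNReal.ofReal (Vv p q (y - rr K T α m) (y + rr K T α m))) x

variable {p q h F : ℝ → ℝ}

lemma Vv_nonneg (hp : Monotone p) (hq : Monotone q) {l u : ℝ} (hlu : l ≤ u) :
    0 ≤ Vv p q l u := by
  have := hp hlu; have := hq hlu; simp only [Vv]; linarith

lemma Vv_mono (hp : Monotone p) (hq : Monotone q) {l l' u u' : ℝ} (h1 : l' ≤ l) (h2 : u ≤ u') :
    Vv p q l u ≤ Vv p q l' u' := by
  have := hp h1; have := hq h1; have := hp h2; have := hq h2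
  simp only [Vv]; linarith

lemma abs_h_sub_le (hp : Monotone p) (hq : Monotone q) (hh : ∀ x, h x = p x - q x)
    {l u c y : ℝ} (hc : c ∈ Set.Icc l u) (hy : y ∈ Set.Icc l u) :
    |h c - h y| ≤ Vv p q l u := by
  have h1 := hp hc.1; have h2 := hp hc.2; have h3 := hq hc.1; have h4 := hq hc.2
  have h5 := hp hy.1; have h6 := hp hy.2; have h7 := hq hy.1; have h8 := hq hy.2
  rw [hh, hh, abs_le]; constructor <;> simp only [Vv] <;> linarith

lemma h_intervalIntegrable (hp : Monotone p) (hq : Monotone q) (hh : ∀ x, h x = p x - q x)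
    (a b : ℝ) : IntervalIntegrable h volume a b := by
  have : h = fun x => p x - q x := funext hh
  rw [this]
  exact ((hp.monotoneOn _).intervalIntegrable).sub ((hq.monotoneOn _).intervalIntegrable)

lemma key1 (hp : Monotone p) (hq : Monotone q) (hh : ∀ x, h x = p x - q x)
    (hF : ∀ x : ℝ, F x = ∫ y in (0:ℝ)..x, h y)
    {a b c ρ : ℝ} (hρ : 0 ≤ ρ) (hb : |b - a| ≤ ρ) (hc : |c - a| ≤ ρ) :
    |h c * (b - a) - (F b - F a)| ≤ ρ * Vv p q (a - ρ) (a + ρ) := by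
  have hint : ∀ u v : ℝ, IntervalIntegrable h volume u v := h_intervalIntegrable hp hq hh
  have hFab : F b - F a = ∫ y in a..b, h y := by
    rw [hF, hF]
    exact intervalIntegral.integral_interval_sub_left (hint 0 b) (hint 0 a)
  have hconst : h c * (b - a) = ∫ _ in a..b, h c := by
    rw [intervalIntegral.integral_const, smul_eq_mul]; ring
  rw [hFab, hconst, ← intervalIntegral.integral_sub intervalIntegrable_const (hint a b)]
  have hVnn : 0 ≤ Vv p q (a - ρ) (a + ρ) := Vv_nonneg hp hq (by linarith)
  have key : ∀ y ∈ Set.uIoc a b, ‖h c - h y‖ ≤ Vv p q (a - ρ) (a + ρ) := by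
    intro y hy
    have hy' : y ∈ Set.uIcc a b := Set.Ioc_subset_Icc_self hy
    have hab := abs_le.1 hb
    have hac := abs_le.1 hc
    have h1 : a - ρ ≤ min a b := by rcases le_total a b with h'|h' <;> simp [min_def, h'] <;> linarith
    have h2 : max a b ≤ a + ρ := by rcases le_total a b with h'|h' <;> simp [max_def, h'] <;> linarith
    have hymem : y ∈ Set.Icc (a - ρ) (a + ρ) := by
      rw [Set.uIcc] at hy'
      exact ⟨le_trans h1 hy'.1, le_trans hy'.2 h2⟩
    exact abs_h_sub_le hp hq hh ⟨by linarith, by linarith⟩ hymem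
  calc ‖∫ y in a..b, (h c - h y)‖ ≤ Vv p q (a - ρ) (a + ρ) * |b - a| :=
        intervalIntegral.norm_integral_le_of_norm_le_const key
    _ ≤ ρ * Vv p q (a - ρ) (a + ρ) := by
        rw [mul_comm]; exact mul_le_mul_of_nonneg_right hb hVnn

lemma psi_measurable (hp : Monotone p) (hq : Monotone q) (K T α R : ℝ) (m : ℕ) :
    Measurable (psi p q K T α R m) := by
  apply Measurable.indicator _ measurableSet_Icc
  apply ENNReal.measurable_ofReal.comp
  have h1 : Measurable fun y : ℝ => p (y + rr K T α m) :=
    hp.measurable.comp (measurable_add_const _)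
  have h2 : Measurable fun y : ℝ => p (y - rr K T α m) :=
    hp.measurable.comp (measurable_sub_const _)
  have h3 : Measurable fun y : ℝ => q (y + rr K T α m) :=
    hq.measurable.comp (measurable_add_const _)
  have h4 : Measurable fun y : ℝ => q (y - rr K T α m) :=
    hq.measurable.comp (measurable_sub_const _)
  exact ((h1.sub h2).add (h3.sub h4))

lemma psi_ge (hp : Monotone p) (hq : Monotone q) {K T α R : ℝ} {m : ℕ} {x a ρ : ℝ}
    (hxR : x ∈ Set.Icc (-R) R) (hx : |x - a| ≤ ρ) (h2ρ : 2 * ρ ≤ rr K T α m) :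
    ENNReal.ofReal (Vv p q (a - ρ) (a + ρ)) ≤ psi p q K T α R m x := by
  rw [psi, Set.indicator_of_mem hxR]
  have hax := abs_le.1 hx
  exact ENNReal.ofReal_le_ofReal (Vv_mono (p := p) (q := q) hp hq (by linarith) (by linarith))

/-- existence of the dyadic level -/
lemma exists_level {T : ℝ} (hT : 0 < T) {d : ℝ} (hd0 : 0 < d) (M : ℕ) (hdM : d ≤ Dm T M) :
    ∃ m : ℕ, M ≤ m ∧ d ≤ Dm T m ∧ Dm T (m + 1) < d := by
  have hhalf : (0:ℝ) ≤ 1/2 := by norm_num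
  have hex : ∃ n : ℕ, Dm T n < d := by
    obtain ⟨n, hn⟩ := exists_pow_lt_of_lt_one (div_pos hd0 hT) (by norm_num : (1:ℝ)/2 < 1)
    refine ⟨n, ?_⟩
    rw [Dm]
    have h1 : T * (1/2)^n < T * (d / T) := mul_lt_mul_of_pos_left hn hT
    have h2 : T * (d / T) = d := by field_simp
    linarith
  classical
  let N := Nat.find hex
  have hNlt : Dm T N < d := Nat.find_spec hex
  have hMN : M < N := by
    by_contra hcon
    push_neg at hcon
    have hmono : Dm T M ≤ Dm T N := by
      rw [Dm, Dm]
      exact mul_le_mul_of_nonneg_left (pow_le_pow_of_le_one hhalf (by norm_num) hcon) hT.le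
    linarith
  refine ⟨N - 1, by omega, ?_, ?_⟩
  · have hlt : N - 1 < N := by omega
    have := Nat.find_min hex hlt
    push_neg at this
    exact this
  · have : N - 1 + 1 = N := by omega
    rw [this]; exact hNlt


lemma key2 (hp : Monotone p) (hq : Monotone q) (hh : ∀ x, h x = p x - q x)
    (hF : ∀ x : ℝ, F x = ∫ y in (0:ℝ)..x, h y)
    {T α K R : ℝ} (hT : 0 < T) (hα : 1 / 2 < α) (hK : 1 ≤ K)
    (hR : K + K * T ^ α ≤ R)
    {x : ℝ → ℝ} (hxm : Measurable x)
    (hxH : ∀ s ∈ Set.Icc (0:ℝ) T, ∀ t ∈ Set.Icc (0:ℝ) T, |x t - x s| ≤ K * |t - s| ^ α)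
    (hx0 : |x 0| ≤ K)
    {u v c : ℝ} (hu : 0 ≤ u) (huv : u < v) (hv : v ≤ T) (hc : c ∈ Set.Icc u v)
    (M : ℕ) (hmesh : v - u ≤ Dm T M) :
    ∃ m : ℕ, M ≤ m ∧
      ENNReal.ofReal |h (x c) * (x v - x u) - (F (x v) - F (x u))| ≤
        ENNReal.ofReal (2 * K) *
          (ENNReal.ofReal (Dm T m ^ (α - 1)) * ∫⁻ s in Set.Ioc u v, psi p q K T α R m (x s)) := by
  have hα0 : 0 < α := by linarith
  have hK0 : (0:ℝ) < K := by linarith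
  set d := v - u with hd
  have hd0 : 0 < d := by simp [hd]; linarith
  obtain ⟨m, hMm, hdm, hdm'⟩ := exists_level hT hd0 M hmesh
  have hDm0 : 0 < Dm T m := lt_of_lt_of_le hd0 hdm
  set ρ := K * d ^ α with hρdef
  have hρ0 : 0 ≤ ρ := by positivity
  have humem : u ∈ Set.Icc (0:ℝ) T := ⟨hu, by linarith⟩
  have hvmem : v ∈ Set.Icc (0:ℝ) T := ⟨by linarith, hv⟩
  have hcmem : c ∈ Set.Icc (0:ℝ) T := ⟨by linarith [hc.1], by linarith [hc.2]⟩
  have h0mem : (0:ℝ) ∈ Set.Icc (0:ℝ) T := ⟨le_refl _, hT.le⟩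
  have habs : ∀ w ∈ Set.Icc u v, |x w - x u| ≤ ρ := by
    intro w hw
    have hwmem : w ∈ Set.Icc (0:ℝ) T := ⟨by linarith [hw.1], by linarith [hw.2]⟩
    have h1 := hxH u humem w hwmem
    have h2 : |w - u| ^ α ≤ d ^ α := by
      apply Real.rpow_le_rpow (abs_nonneg _) _ hα0.le
      rw [abs_le]; constructor <;> [linarith [hw.1]; linarith [hw.2]]
    calc |x w - x u| ≤ K * |w - u| ^ α := h1
      _ ≤ K * d ^ α := by nlinarith
  have hxb : |x v - x u| ≤ ρ := habs v ⟨huv.le, le_refl _⟩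
  have hxc : |x c - x u| ≤ ρ := habs c hc
  have hkey1 := key1 hp hq hh hF hρ0 hxb hxc
  set V := Vv p q (x u - ρ) (x u + ρ) with hVdef
  have hVnn : 0 ≤ V := Vv_nonneg hp hq (by linarith)
  -- pointwise lower bound for psi on the time interval
  have hpsi : ∀ s ∈ Set.Ioc u v, ENNReal.ofReal V ≤ psi p q K T α R m (x s) := by
    intro s hs
    have hsmem : s ∈ Set.Icc (0:ℝ) T := ⟨by linarith [hs.1], by linarith [hs.2]⟩
    have hxsR : x s ∈ Set.Icc (-R) R := by
      have h1 := hxH 0 h0mem s hsmem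
      have h2 : |s - 0| ^ α ≤ T ^ α := by
        apply Real.rpow_le_rpow (abs_nonneg _) _ hα0.le
        rw [abs_le]; constructor <;> linarith [hsmem.1, hsmem.2]
      have h3 : |x s - x 0| ≤ K * T ^ α := by nlinarith
      have h4 : |x s| ≤ K + K * T ^ α := by
        have := abs_sub_abs_le_abs_sub (x s) (x 0)
        linarith [abs_le.1 hx0, abs_le.1 h3, abs_sub_le (x s) (x 0) 0,
          abs_le.1 (le_refl |x s - x 0|)]
      rw [Set.mem_Icc]
      constructor <;> [linarith [abs_le.1 h4]; linarith [(abs_le.1 h4).2]]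
    have hxs : |x s - x u| ≤ ρ := habs s ⟨hs.1.le, hs.2⟩
    have h2ρ : 2 * ρ ≤ rr K T α m := by
      rw [rr]
      have : d ^ α ≤ Dm T m ^ α := Real.rpow_le_rpow hd0.le hdm hα0.le
      rw [hρdef]; nlinarith
    exact psi_ge hp hq hxsR hxs h2ρ
  -- lower bound the lintegral by the constant
  have hlin : ENNReal.ofReal V * ENNReal.ofReal d ≤
      ∫⁻ s in Set.Ioc u v, psi p q K T α R m (x s) := by
    have h1 : ∫⁻ _ in Set.Ioc u v, (ENNReal.ofReal V) ∂volume =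
        ENNReal.ofReal V * volume (Set.Ioc u v) := setLIntegral_const _ _
    have h2 : volume (Set.Ioc u v) = ENNReal.ofReal d := by rw [Real.volume_Ioc]
    calc ENNReal.ofReal V * ENNReal.ofReal d
        = ∫⁻ _ in Set.Ioc u v, (ENNReal.ofReal V) ∂volume := by rw [h1, h2]
      _ ≤ ∫⁻ s in Set.Ioc u v, psi p q K T α R m (x s) ∂volume :=
          setLIntegral_mono ((psi_measurable hp hq K T α R m).comp hxm) hpsi
  -- the key real inequality on ρ
  have hrpow : d ^ (α - 1) ≤ 2 * Dm T m ^ (α - 1) := by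
    have hDnn : (0:ℝ) ≤ Dm T m ^ (α - 1) := Real.rpow_nonneg hDm0.le _
    rcases le_or_gt α 1 with hα1 | hα1
    · have hhalf : Dm T m / 2 < d := by
        have : Dm T (m + 1) = Dm T m * (1 / 2) := by rw [Dm, Dm, pow_succ]; ring
        rw [this] at hdm'; linarith
      have h1 : d ^ (α - 1) ≤ (Dm T m / 2) ^ (α - 1) :=
        Real.rpow_le_rpow_of_nonpos (by positivity) hhalf.le (by linarith)
      have h2 : (Dm T m / 2) ^ (α - 1) = Dm T m ^ (α - 1) * ((2:ℝ)⁻¹) ^ (α - 1) := by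
        rw [div_eq_mul_inv, Real.mul_rpow hDm0.le (by norm_num)]
      have h3 : ((2:ℝ)⁻¹) ^ (α - 1) = ((2:ℝ) ^ (α - 1))⁻¹ := Real.inv_rpow (by norm_num) _
      have h4 : (1:ℝ)/2 ≤ (2:ℝ) ^ (α - 1) := by
        have := Real.rpow_le_rpow_of_exponent_le (one_le_two) (by linarith : (-1:ℝ) ≤ α - 1)
        rwa [Real.rpow_neg_one, ← one_div] at this
      have h5 : ((2:ℝ) ^ (α - 1))⁻¹ ≤ 2 := by
        have hp2 : (0:ℝ) < (2:ℝ) ^ (α - 1) := Real.rpow_pos_of_pos two_pos _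
        rw [inv_le_comm₀ hp2 (by norm_num)]
        linarith
      calc d ^ (α - 1) ≤ Dm T m ^ (α - 1) * ((2:ℝ) ^ (α - 1))⁻¹ := by
            rw [← h3, ← h2]; exact h1
        _ ≤ Dm T m ^ (α - 1) * 2 := by nlinarith
        _ = 2 * Dm T m ^ (α - 1) := by ring
    · have h1 : d ^ (α - 1) ≤ Dm T m ^ (α - 1) :=
        Real.rpow_le_rpow hd0.le hdm (by linarith)
      linarith
  have hρle : ρ ≤ 2 * K * Dm T m ^ (α - 1) * d := by
    have hsplit : d ^ α = d ^ (α - 1) * d := by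
      rw [show α = α - 1 + 1 by ring, Real.rpow_add hd0, Real.rpow_one]; ring_nf
    rw [hρdef, hsplit]
    have hDnn : (0:ℝ) ≤ Dm T m ^ (α - 1) := Real.rpow_nonneg hDm0.le _
    nlinarith [mul_le_mul_of_nonneg_left hrpow (by positivity : (0:ℝ) ≤ K * d), Real.rpow_nonneg hd0.le (α - 1)]
  refine ⟨m, hMm, ?_⟩
  have e1 : ENNReal.ofReal ρ ≤
      ENNReal.ofReal (2 * K) * ENNReal.ofReal (Dm T m ^ (α - 1)) * ENNReal.ofReal d := by
    rw [← ENNReal.ofReal_mul (by positivity), ← ENNReal.ofReal_mul (by positivity)]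
    exact ENNReal.ofReal_le_ofReal hρle
  calc ENNReal.ofReal |h (x c) * (x v - x u) - (F (x v) - F (x u))|
      ≤ ENNReal.ofReal (ρ * V) := ENNReal.ofReal_le_ofReal hkey1
    _ = ENNReal.ofReal ρ * ENNReal.ofReal V := ENNReal.ofReal_mul hρ0
    _ ≤ ENNReal.ofReal (2 * K) * ENNReal.ofReal (Dm T m ^ (α - 1)) * ENNReal.ofReal d *
          ENNReal.ofReal V := mul_le_mul_left e1 _
    _ = ENNReal.ofReal (2 * K) *
          (ENNReal.ofReal (Dm T m ^ (α - 1)) * (ENNReal.ofReal V * ENNReal.ofReal d)) := by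
        ring
    _ ≤ ENNReal.ofReal (2 * K) *
          (ENNReal.ofReal (Dm T m ^ (α - 1)) * ∫⁻ s in Set.Ioc u v, psi p q K T α R m (x s)) := by
        gcongr

lemma tp_t_mono {T : ℝ} (π : TaggedPartition T) {i j : ℕ} (hij : i ≤ j) (hjk : j ≤ π.k) :
    π.t i ≤ π.t j := by
  induction j with
  | zero =>
    obtain rfl := Nat.le_zero.1 hij
    exact le_refl _
  | succ n ih =>
    rcases Nat.eq_or_lt_of_le hij with rfl | hlt
    · exact le_refl _
    · have h1 : π.t i ≤ π.t n := ih (by omega) (by omega)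
      have h2 : π.t n < π.t (n + 1) := π.mono n (by omega)
      linarith

lemma tp_t_nonneg {T : ℝ} (π : TaggedPartition T) {i : ℕ} (hik : i ≤ π.k) : 0 ≤ π.t i := by
  have := tp_t_mono π (Nat.zero_le i) hik; rw [π.h0] at this; linarith

lemma tp_t_le {T : ℝ} (π : TaggedPartition T) {i : ℕ} (hik : i ≤ π.k) : π.t i ≤ T := by
  have := tp_t_mono π hik (le_refl _); rw [π.hT] at this; linarith

lemma sum_lintegral_le {T : ℝ} (π : TaggedPartition T) (hT : 0 < T) (f : ℝ → ℝ≥0∞)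
    (G : Finset ℕ) (hG : G ⊆ Finset.range π.k) :
    ∑ i ∈ G, ∫⁻ s in Set.Ioc (π.t i) (π.t (i + 1)), f s ≤ ∫⁻ s in Set.Ioc 0 T, f s := by
  have hdisj : (G : Set ℕ).PairwiseDisjoint (fun i => Set.Ioc (π.t i) (π.t (i + 1))) := by
    intro i hi j hj hij
    have hik : i < π.k := Finset.mem_range.1 (hG hi)
    have hjk : j < π.k := Finset.mem_range.1 (hG hj)
    rcases lt_or_gt_of_ne hij with hlt | hlt
    · refine Set.Ioc_disjoint_Ioc.2 ?_
      have : π.t (i + 1) ≤ π.t j := tp_t_mono π (by omega) (by omega)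
      exact le_trans (min_le_left _ _) (le_trans this (le_max_right _ _))
    · refine Set.Ioc_disjoint_Ioc.2 ?_
      have : π.t (j + 1) ≤ π.t i := tp_t_mono π (by omega) (by omega)
      exact le_trans (min_le_right _ _) (le_trans this (le_max_left _ _))
  rw [← lintegral_biUnion_finset hdisj (fun i _ => measurableSet_Ioc) f]
  apply lintegral_mono_set
  intro s hs
  simp only [Set.mem_iUnion] at hs
  obtain ⟨i, hi, hs⟩ := hs
  have hik : i < π.k := Finset.mem_range.1 (hG hi)
  exact ⟨lt_of_le_of_lt (tp_t_nonneg π (by omega)) hs.1, le_trans hs.2 (tp_t_le π (by omega))⟩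

lemma key3 (hp : Monotone p) (hq : Monotone q) (hh : ∀ x, h x = p x - q x)
    (hF : ∀ x : ℝ, F x = ∫ y in (0:ℝ)..x, h y)
    {T α K R : ℝ} (hT : 0 < T) (hα : 1 / 2 < α) (hK : 1 ≤ K)
    (hR : K + K * T ^ α ≤ R)
    {x : ℝ → ℝ} (hxm : Measurable x)
    (hxH : ∀ s ∈ Set.Icc (0:ℝ) T, ∀ t ∈ Set.Icc (0:ℝ) T, |x t - x s| ≤ K * |t - s| ^ α)
    (hx0 : |x 0| ≤ K)
    (π : TaggedPartition T) (M : ℕ) (hmesh : π.mesh ≤ Dm T M) :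
    ENNReal.ofReal |π.rsSum (fun u => h (x u)) x - (F (x T) - F (x 0))| ≤
      ENNReal.ofReal (2 * K) * ∑' n : ℕ,
        (ENNReal.ofReal (Dm T (M + n) ^ (α - 1)) *
          ∫⁻ s in Set.Ioc 0 T, psi p q K T α R (M + n) (x s)) := by
  classical
  set B : ℕ → ℝ≥0∞ := fun j =>
    ENNReal.ofReal (Dm T j ^ (α - 1)) * ∫⁻ s in Set.Ioc 0 T, psi p q K T α R j (x s) with hBdef
  set dd : ℕ → ℝ := fun i =>
    h (x (π.tag i)) * (x (π.t (i + 1)) - x (π.t i)) - (F (x (π.t (i + 1))) - F (x (π.t i)))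
    with hdd
  -- telescoping
  have htel : F (x T) - F (x 0) = ∑ i ∈ Finset.range π.k, (F (x (π.t (i + 1))) - F (x (π.t i))) := by
    rw [Finset.sum_range_sub (fun i => F (x (π.t i))) π.k, π.hT, π.h0]
  have hdiff : π.rsSum (fun u => h (x u)) x - (F (x T) - F (x 0)) = ∑ i ∈ Finset.range π.k, dd i := by
    rw [TaggedPartition.rsSum, htel, ← Finset.sum_sub_distrib]
  -- per-interval bounds
  have H : ∀ i : ℕ, ∃ m : ℕ, M ≤ m ∧ (i < π.k →
      ENNReal.ofReal |dd i| ≤ ENNReal.ofReal (2 * K) *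
        (ENNReal.ofReal (Dm T m ^ (α - 1)) *
          ∫⁻ s in Set.Ioc (π.t i) (π.t (i + 1)), psi p q K T α R m (x s))) := by
    intro i
    by_cases hi : i < π.k
    · have hmesh_i : π.t (i + 1) - π.t i ≤ Dm T M :=
        le_trans (Finset.le_sup' (f := fun i => π.t (i + 1) - π.t i)
          (Finset.mem_range.2 hi)) hmesh
      obtain ⟨m, h1, h2⟩ := key2 hp hq hh hF hT hα hK hR hxm hxH hx0
        (tp_t_nonneg π (by omega)) (π.mono i hi) (tp_t_le π (by omega)) (π.tagmem i hi) M hmesh_i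
      exact ⟨m, h1, fun _ => h2⟩
    · exact ⟨M, le_refl _, fun hcon => absurd hcon hi⟩
  choose mf hm1 hm2 using H
  set u : ℕ → ℝ≥0∞ := fun i =>
    ENNReal.ofReal (Dm T (mf i) ^ (α - 1)) *
      ∫⁻ s in Set.Ioc (π.t i) (π.t (i + 1)), psi p q K T α R (mf i) (x s) with hudef
  -- grouping the sum of u by the fibers of mf
  have hgroup : ∑ i ∈ Finset.range π.k, u i ≤ ∑' n : ℕ, B (M + n) := by
    set img := (Finset.range π.k).image mf with himg
    have hfib := Finset.sum_fiberwise_of_maps_to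
      (g := mf) (t := img) (fun i hi => Finset.mem_image_of_mem _ hi) u
    rw [← hfib]
    have hinner : ∀ j ∈ img, (∑ i ∈ (Finset.range π.k).filter (fun i => mf i = j), u i) ≤ B j := by
      intro j hj
      have : (∑ i ∈ (Finset.range π.k).filter (fun i => mf i = j), u i) =
          ENNReal.ofReal (Dm T j ^ (α - 1)) *
            ∑ i ∈ (Finset.range π.k).filter (fun i => mf i = j),
              ∫⁻ s in Set.Ioc (π.t i) (π.t (i + 1)), psi p q K T α R j (x s) := by
        rw [Finset.mul_sum]
        refine Finset.sum_congr rfl (fun i hi => ?_)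
        rw [hudef]
        simp only
        rw [(Finset.mem_filter.1 hi).2]
      rw [this, hBdef]
      refine mul_le_mul_right ?_ _
      exact sum_lintegral_le π hT _ _ (Finset.filter_subset _ _)
    calc ∑ j ∈ img, ∑ i ∈ (Finset.range π.k).filter (fun i => mf i = j), u i
        ≤ ∑ j ∈ img, B j := Finset.sum_le_sum hinner
      _ ≤ ∑' n : ℕ, B (M + n) := by
          have hjM : ∀ j ∈ img, M ≤ j := by
            intro j hj
            obtain ⟨i, _, rfl⟩ := Finset.mem_image.1 hj
            exact hm1 i
          have hinj : ∀ a ∈ img, ∀ b ∈ img, a - M = b - M → a = b := by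
            intro a ha b hb hab
            have := hjM a ha; have := hjM b hb; omega
          have : ∑ j ∈ img, B j = ∑ n ∈ img.image (· - M), B (M + n) := by
            rw [Finset.sum_image hinj]
            exact Finset.sum_congr rfl (fun j hj => by
              have := hjM j hj
              congr 1
              omega)
          rw [this]
          exact ENNReal.sum_le_tsum _
  -- assemble
  rw [hdiff]
  calc ENNReal.ofReal |∑ i ∈ Finset.range π.k, dd i|
      ≤ ENNReal.ofReal (∑ i ∈ Finset.range π.k, |dd i|) :=
        ENNReal.ofReal_le_ofReal (Finset.abs_sum_le_sum_abs _ _)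
    _ = ∑ i ∈ Finset.range π.k, ENNReal.ofReal |dd i| :=
        ENNReal.ofReal_sum_of_nonneg (fun i _ => abs_nonneg _)
    _ ≤ ∑ i ∈ Finset.range π.k, ENNReal.ofReal (2 * K) * u i :=
        Finset.sum_le_sum (fun i hi => hm2 i (Finset.mem_range.1 hi))
    _ = ENNReal.ofReal (2 * K) * ∑ i ∈ Finset.range π.k, u i := by rw [Finset.mul_sum]
    _ ≤ ENNReal.ofReal (2 * K) * ∑' n : ℕ, B (M + n) := mul_le_mul_right hgroup _

lemma rr_nonneg {K T α : ℝ} (hK : 0 ≤ K) (hT : 0 < T) (m : ℕ) : 0 ≤ rr K T α m := by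
  have : (0:ℝ) < Dm T m := by rw [Dm]; positivity
  rw [rr]; positivity

lemma rr_le {K T α : ℝ} (hK : 0 ≤ K) (hT : 0 < T) (hα : 0 < α) (m : ℕ) :
    rr K T α m ≤ rr K T α 0 := by
  rw [rr, rr]
  have h1 : Dm T m ≤ Dm T 0 := by
    rw [Dm, Dm, pow_zero]
    nlinarith [pow_le_one₀ (by norm_num : (0:ℝ) ≤ 1/2) (by norm_num : (1:ℝ)/2 ≤ 1) (n := m)]
  have h2 : (0:ℝ) < Dm T m := by rw [Dm]; positivity
  have := Real.rpow_le_rpow h2.le h1 hα.le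
  nlinarith

lemma psi_lintegral_le (hp : Monotone p) (hq : Monotone q) {K T α R : ℝ}
    (hK : 0 ≤ K) (hT : 0 < T) (hα : 0 < α) (hR : 0 ≤ R) (m : ℕ) :
    ∫⁻ y, psi p q K T α R m y ∂volume ≤
      ENNReal.ofReal (2 * rr K T α m *
        Vv p q (-R - rr K T α 0) (R + rr K T α 0)) := by
  set r := rr K T α m with hrdef
  set ζ := rr K T α 0 with hζdef
  have hr0 : 0 ≤ r := rr_nonneg hK hT m
  have hrζ : r ≤ ζ := rr_le hK hT hα m
  have hζ0 : 0 ≤ ζ := le_trans hr0 hrζ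
  set G : ℝ → ℝ := fun y => p y + q y with hGdef
  have hG : Monotone G := hp.add hq
  have hGint : ∀ a b : ℝ, IntervalIntegrable G volume a b :=
    fun a b => (hG.monotoneOn _).intervalIntegrable
  have hVreq : ∀ l u : ℝ, Vv p q l u = G u - G l := by intro l u; rw [Vv, hGdef]; ring
  set Vr : ℝ → ℝ := fun y => Vv p q (y - r) (y + r) with hVrdef
  have hm1 : Monotone (fun y : ℝ => G (y + r)) := hG.comp (monotone_id.add_const r)
  have hmsub : Monotone (fun y : ℝ => y - r) := fun a b hab => by simp only; linarith
  have hm2 : Monotone (fun y : ℝ => G (y - r)) := hG.comp hmsub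
  have hVrint : IntervalIntegrable Vr volume (-R) R := by
    have : Vr = fun y => G (y + r) - G (y - r) := by
      funext y; rw [hVrdef]; exact hVreq _ _
    rw [this]
    exact (hm1.monotoneOn _).intervalIntegrable.sub (hm2.monotoneOn _).intervalIntegrable
  have hRR : (-R : ℝ) ≤ R := by linarith
  -- step 1: lintegral to interval integral
  have step1 : ∫⁻ y, psi p q K T α R m y ∂volume =
      ENNReal.ofReal (∫ y in (-R)..R, Vr y) := by
    have e0 : ∫⁻ y, psi p q K T α R m y ∂volume =
        ∫⁻ y in Set.Icc (-R) R, ENNReal.ofReal (Vr y) ∂volume := by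
      simp only [psi]
      exact lintegral_indicator measurableSet_Icc _
    have e1 : ∫⁻ y in Set.Icc (-R) R, ENNReal.ofReal (Vr y) ∂volume =
        ∫⁻ y in Set.Ioc (-R) R, ENNReal.ofReal (Vr y) ∂volume :=
      (setLIntegral_congr (MeasureTheory.Ioc_ae_eq_Icc)).symm
    have e2 : ENNReal.ofReal (∫ y in Set.Ioc (-R) R, Vr y ∂volume) =
        ∫⁻ y in Set.Ioc (-R) R, ENNReal.ofReal (Vr y) ∂volume := by
      apply ofReal_integral_eq_lintegral_ofReal hVrint.1
      filter_upwards with y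
      exact Vv_nonneg hp hq (by linarith)
    rw [e0, e1, ← e2, intervalIntegral.integral_of_le hRR]
  -- step 2: the interval integral bound
  have step2 : ∫ y in (-R)..R, Vr y ≤ 2 * r * Vv p q (-R - ζ) (R + ζ) := by
    have hVreqfun : Vr = fun y => G (y + r) - G (y - r) := by
      funext y; rw [hVrdef]; exact hVreq _ _
    have hsub : ∫ y in (-R)..R, Vr y =
        (∫ y in (-R)..R, G (y + r)) - ∫ y in (-R)..R, G (y - r) := by
      rw [hVreqfun]
      exact intervalIntegral.integral_sub (hm1.monotoneOn _).intervalIntegrable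
        (hm2.monotoneOn _).intervalIntegrable
    have hc1 : ∫ y in (-R)..R, G (y + r) = ∫ y in (-R + r)..(R + r), G y :=
      intervalIntegral.integral_comp_add_right G r
    have hc2 : ∫ y in (-R)..R, G (y - r) = ∫ y in (-R - r)..(R - r), G y :=
      intervalIntegral.integral_comp_sub_right G r
    have e1 : (∫ y in (-R + r)..(R - r), G y) + ∫ y in (R - r)..(R + r), G y =
        ∫ y in (-R + r)..(R + r), G y :=
      intervalIntegral.integral_add_adjacent_intervals (hGint _ _) (hGint _ _)
    have e2 : (∫ y in (-R - r)..(-R + r), G y) + ∫ y in (-R + r)..(R - r), G y =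
        ∫ y in (-R - r)..(R - r), G y :=
      intervalIntegral.integral_add_adjacent_intervals (hGint _ _) (hGint _ _)
    have bnd1 : ∫ y in (R - r)..(R + r), G y ≤ 2 * r * G (R + r) := by
      have hle : R - r ≤ R + r := by linarith
      have := intervalIntegral.integral_mono_on hle (hGint _ _) intervalIntegrable_const
        (fun y hy => hG hy.2)
      rw [intervalIntegral.integral_const, smul_eq_mul] at this
      calc ∫ y in (R - r)..(R + r), G y ≤ (R + r - (R - r)) * G (R + r) := this
        _ = 2 * r * G (R + r) := by ring
    have bnd2 : 2 * r * G (-R - r) ≤ ∫ y in (-R - r)..(-R + r), G y := by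
      have hle : -R - r ≤ -R + r := by linarith
      have := intervalIntegral.integral_mono_on hle intervalIntegrable_const (hGint _ _)
        (fun y hy => hG hy.1)
      rw [intervalIntegral.integral_const, smul_eq_mul] at this
      calc 2 * r * G (-R - r) = (-R + r - (-R - r)) * G (-R - r) := by ring
        _ ≤ ∫ y in (-R - r)..(-R + r), G y := this
    have hmono : G (R + r) - G (-R - r) ≤ G (R + ζ) - G (-R - ζ) := by
      have := hG (show R + r ≤ R + ζ by linarith)
      have := hG (show -R - ζ ≤ -R - r by linarith)
      linarith
    rw [hVreq]
    calc ∫ y in (-R)..R, Vr y = (∫ y in (R - r)..(R + r), G y) -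
          ∫ y in (-R - r)..(-R + r), G y := by
          rw [hsub, hc1, hc2]; linarith
      _ ≤ 2 * r * G (R + r) - 2 * r * G (-R - r) := by linarith
      _ = 2 * r * (G (R + r) - G (-R - r)) := by ring
      _ ≤ 2 * r * (G (R + ζ) - G (-R - ζ)) := by nlinarith
  rw [step1]
  exact ENNReal.ofReal_le_ofReal (le_trans step2 (by rw [hVreq]))

lemma key5 {Ω : Type*} [MeasurableSpace Ω] (P : Measure Ω) [IsProbabilityMeasure P]
    {T α : ℝ} (hT : 0 < T) (hα : 1 / 2 < α)
    {X : ℝ → Ω → ℝ} (hX : Measurable (Function.uncurry X))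
    {g : ℝ → ℝ} (hg0 : ∀ t, 0 ≤ g t) (hgL1 : IntegrableOn g (Set.Icc 0 T))
    (hdens : BoundedDensityAssumption P T X g)
    (hp : Monotone p) (hq : Monotone q) {K R : ℝ} (hK : 1 ≤ K) (hR : 0 ≤ R) :
    ∑' m : ℕ, ∫⁻ ω, (ENNReal.ofReal (Dm T m ^ (α - 1)) *
      ∫⁻ s in Set.Ioc 0 T, psi p q K T α R m (X s ω)) ∂P ≠ ∞ := by
  have hα0 : 0 < α := by linarith
  have hK0 : (0:ℝ) < K := by linarith
  have hXs : ∀ s : ℝ, Measurable (X s) := fun s => hX.comp measurable_prodMk_left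
  set W : ℝ := Vv p q (-R - rr K T α 0) (R + rr K T α 0) with hWdef
  have hζ0 : 0 ≤ rr K T α 0 := rr_nonneg hK0.le hT 0
  have hW0 : 0 ≤ W := Vv_nonneg hp hq (by linarith)
  set γ : ℝ≥0∞ := ∫⁻ s in Set.Ioc 0 T, ENNReal.ofReal (g s) ∂volume with hγdef
  have hγ : γ ≠ ∞ := by
    have h1 : γ ≤ ∫⁻ s in Set.Icc 0 T, ENNReal.ofReal (g s) ∂volume :=
      lintegral_mono_set Set.Ioc_subset_Icc_self
    have h2 : ∫⁻ s in Set.Icc 0 T, ENNReal.ofReal (g s) ∂volume =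
        ENNReal.ofReal (∫ s in Set.Icc 0 T, g s ∂volume) := by
      rw [ofReal_integral_eq_lintegral_ofReal hgL1]
      filter_upwards with s using hg0 s
    exact ne_top_of_le_ne_top (by rw [h2]; exact ENNReal.ofReal_ne_top) h1
  -- per-m bound on the expectation
  have hper : ∀ m : ℕ, (∫⁻ ω, (ENNReal.ofReal (Dm T m ^ (α - 1)) *
      ∫⁻ s in Set.Ioc 0 T, psi p q K T α R m (X s ω)) ∂P) ≤
      γ * ENNReal.ofReal (4 * K * W) * ENNReal.ofReal (Dm T m ^ (2 * α - 1)) := by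
    intro m
    have hDm0 : (0:ℝ) < Dm T m := by rw [Dm]; positivity
    set Cm : ℝ≥0∞ := ENNReal.ofReal (2 * rr K T α m * W) with hCmdef
    have hmeas_unc : Measurable (Function.uncurry (fun ω s => psi p q K T α R m (X s ω))) := by
      apply (psi_measurable hp hq K T α R m).comp
      exact hX.comp measurable_swap
    have hswap : ∫⁻ ω, (∫⁻ s in Set.Ioc 0 T, psi p q K T α R m (X s ω)) ∂P =
        ∫⁻ s in Set.Ioc 0 T, (∫⁻ ω, psi p q K T α R m (X s ω) ∂P) ∂volume :=
      lintegral_lintegral_swap hmeas_unc.aemeasurable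
    have hae : ∀ᵐ s ∂(volume.restrict (Set.Ioc 0 T)),
        (∫⁻ ω, psi p q K T α R m (X s ω) ∂P) ≤ ENNReal.ofReal (g s) * Cm := by
      have hsub := ae_restrict_of_ae_restrict_of_subset Set.Ioc_subset_Icc_self hdens
      filter_upwards [hsub] with s hds
      have hle : P.map (X s) ≤ ENNReal.ofReal (g s) • volume := by
        refine Measure.le_iff.2 (fun A hA => ?_)
        rw [Measure.map_apply (hXs s) hA, Measure.smul_apply, smul_eq_mul]
        exact hds A hA
      calc ∫⁻ ω, psi p q K T α R m (X s ω) ∂P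
          = ∫⁻ y, psi p q K T α R m y ∂(P.map (X s)) :=
            (lintegral_map (psi_measurable hp hq K T α R m) (hXs s)).symm
        _ ≤ ∫⁻ y, psi p q K T α R m y ∂(ENNReal.ofReal (g s) • volume) :=
            lintegral_mono' hle (le_refl _)
        _ = ENNReal.ofReal (g s) * ∫⁻ y, psi p q K T α R m y ∂volume :=
            lintegral_smul_measure _ _
        _ ≤ ENNReal.ofReal (g s) * Cm :=
            mul_le_mul_right (psi_lintegral_le hp hq hK0.le hT hα0 hR m) _
    have hconst : ∫⁻ ω, (ENNReal.ofReal (Dm T m ^ (α - 1)) *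
        ∫⁻ s in Set.Ioc 0 T, psi p q K T α R m (X s ω)) ∂P =
        ENNReal.ofReal (Dm T m ^ (α - 1)) *
          ∫⁻ ω, (∫⁻ s in Set.Ioc 0 T, psi p q K T α R m (X s ω)) ∂P :=
      lintegral_const_mul' _ _ ENNReal.ofReal_ne_top
    have hmul : ∫⁻ s in Set.Ioc 0 T, (ENNReal.ofReal (g s) * Cm) ∂volume = γ * Cm := by
      rw [hγdef, ← lintegral_mul_const' Cm _ (by rw [hCmdef]; exact ENNReal.ofReal_ne_top)]
    have hbound : ∫⁻ ω, (ENNReal.ofReal (Dm T m ^ (α - 1)) *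
        ∫⁻ s in Set.Ioc 0 T, psi p q K T α R m (X s ω)) ∂P ≤
        ENNReal.ofReal (Dm T m ^ (α - 1)) * (γ * Cm) := by
      rw [hconst, hswap]
      exact mul_le_mul_right (le_trans (lintegral_mono_ae hae) (le_of_eq hmul)) _
    refine le_trans hbound (le_of_eq ?_)
    have hc : ENNReal.ofReal (Dm T m ^ (α - 1)) * Cm =
        ENNReal.ofReal (4 * K * W) * ENNReal.ofReal (Dm T m ^ (2 * α - 1)) := by
      rw [hCmdef, ← ENNReal.ofReal_mul (Real.rpow_nonneg hDm0.le _),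
        ← ENNReal.ofReal_mul (by positivity)]
      congr 1
      rw [rr]
      have : Dm T m ^ (α - 1) * Dm T m ^ α = Dm T m ^ (2 * α - 1) := by
        rw [← Real.rpow_add hDm0]; ring_nf
      linear_combination 4 * K * W * this
    rw [← mul_assoc, mul_comm (ENNReal.ofReal (Dm T m ^ (α - 1))) γ, mul_assoc, hc,
      ← mul_assoc]
  -- sum the bound
  have hgeo : ∑' m : ℕ, ENNReal.ofReal (Dm T m ^ (2 * α - 1)) ≠ ∞ := by
    set β := 2 * α - 1 with hβ
    set c : ℝ := (1/2 : ℝ) ^ β with hcdef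
    have hc0 : 0 ≤ c := Real.rpow_nonneg (by norm_num) _
    have hc1 : c < 1 := Real.rpow_lt_one (by norm_num) (by norm_num) (by rw [hβ]; linarith)
    have he : ∀ m : ℕ, Dm T m ^ β = T ^ β * c ^ m := by
      intro m
      rw [Dm, Real.mul_rpow hT.le (by positivity), hcdef]
      congr 1
      rw [← Real.rpow_natCast ((1:ℝ)/2) m, ← Real.rpow_natCast ((1/2:ℝ) ^ β) m,
        ← Real.rpow_mul (by norm_num), ← Real.rpow_mul (by norm_num), mul_comm]
    have hsum : ∑' m : ℕ, ENNReal.ofReal (Dm T m ^ β) =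
        ENNReal.ofReal (T ^ β) * ∑' m : ℕ, (ENNReal.ofReal c) ^ m := by
      rw [← ENNReal.tsum_mul_left]
      congr 1
      funext m
      rw [he m, ENNReal.ofReal_mul (Real.rpow_nonneg hT.le _), ENNReal.ofReal_pow hc0]
    rw [hsum, ENNReal.tsum_geometric]
    refine ENNReal.mul_ne_top ENNReal.ofReal_ne_top ?_
    rw [ENNReal.inv_ne_top]
    intro hcon
    rw [tsub_eq_zero_iff_le] at hcon
    exact absurd hcon (not_le.2 (ENNReal.ofReal_lt_one.2 hc1))
  refine ne_top_of_le_ne_top ?_ (ENNReal.tsum_le_tsum hper)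
  rw [ENNReal.tsum_mul_left]
  exact ENNReal.mul_ne_top (ENNReal.mul_ne_top hγ ENNReal.ofReal_ne_top) hgeo

end ItoAux

/-- Itô formula. With `F(x) = ∫₀^x h(y) dy`, the Riemann–Stieltjes sums
`Σ_i h(X_{τ_i})(X_{t_i} - X_{t_{i-1}})` converge almost surely to `F(X_T) - F(X_0)` along any
sequence of tagged partitions with vanishing mesh. -/
theorem ito_formula_pathwise
    {Ω : Type*} [MeasurableSpace Ω] (P : Measure Ω) [IsProbabilityMeasure P]
    (T α : ℝ) (hT : 0 < T) (hα : 1 / 2 < α)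
    (X : ℝ → Ω → ℝ) (hX : Measurable (Function.uncurry X))
    (hXHolder : ∀ᵐ ω ∂P, HolderOnIcc α T (fun t => X t ω))
    (g : ℝ → ℝ) (hg0 : ∀ t, 0 ≤ g t) (hgL1 : IntegrableOn g (Set.Icc 0 T))
    (hdens : BoundedDensityAssumption P T X g)
    (h : ℝ → ℝ) (hlc : ∀ x : ℝ, ContinuousWithinAt h (Set.Iic x) x)
    (hbv : LocallyBoundedVariationOn h Set.univ)
    (F : ℝ → ℝ) (hF : ∀ x : ℝ, F x = ∫ y in (0:ℝ)..x, h y) :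
    ∀ π : ℕ → TaggedPartition T,
      Tendsto (fun n => (π n).mesh) atTop (nhds 0) →
      ∀ᵐ ω ∂P, Tendsto
        (fun n => (π n).rsSum (fun u => h (X u ω)) (fun u => X u ω))
        atTop (nhds (F (X T ω) - F (X 0 ω))) := by
  intro π hπ
  obtain ⟨p, q, hpOn, hqOn, hpq⟩ := hbv.exists_monotoneOn_sub_monotoneOn
  have hp : Monotone p := monotoneOn_univ.1 hpOn
  have hq : Monotone q := monotoneOn_univ.1 hqOn
  have hh : ∀ x, h x = p x - q x := fun x => by rw [hpq]; rfl
  -- the dominating series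
  set KR : ℕ → ℝ := fun K => (K : ℝ) + 1 with hKRdef
  set RK : ℕ → ℝ := fun K => KR K + KR K * T ^ α with hRKdef
  have hKR1 : ∀ K : ℕ, 1 ≤ KR K := fun K => by
    simp only [hKRdef]
    have : (0:ℝ) ≤ (K:ℝ) := Nat.cast_nonneg K
    linarith
  have hRK0 : ∀ K : ℕ, 0 ≤ RK K := fun K => by
    have h1 := hKR1 K
    have h2 : (0:ℝ) ≤ T ^ α := Real.rpow_nonneg hT.le _
    simp only [hRKdef]; nlinarith
  set B : ℕ → ℕ → Ω → ℝ≥0∞ := fun K m ω =>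
    ENNReal.ofReal (ItoAux.Dm T m ^ (α - 1)) *
      ∫⁻ s in Set.Ioc 0 T, ItoAux.psi p q (KR K) T α (RK K) m (X s ω) with hBdef
  have hBmeas : ∀ K m : ℕ, Measurable (B K m) := by
    intro K m
    apply Measurable.const_mul
    apply Measurable.lintegral_prod_right (f := fun ω s => ItoAux.psi p q (KR K) T α (RK K) m (X s ω))
    exact (ItoAux.psi_measurable hp hq _ T α _ m).comp (hX.comp measurable_swap)
  have hae2 : ∀ᵐ ω ∂P, ∀ K : ℕ, ∑' m, B K m ω < ∞ := by
    rw [ae_all_iff]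
    intro K
    apply ae_lt_top (Measurable.ennreal_tsum (fun m => hBmeas K m))
    rw [lintegral_tsum (fun m => (hBmeas K m).aemeasurable)]
    exact ItoAux.key5 P hT hα hX hg0 hgL1 hdens hp hq (hKR1 K) (hRK0 K)
  filter_upwards [hXHolder, hae2] with ω hHol hfin
  obtain ⟨C, hC⟩ := hHol
  obtain ⟨K, hK⟩ := exists_nat_ge (max C (|X 0 ω|))
  have hCK : C ≤ KR K := by
    have := le_max_left C (|X 0 ω|); simp only [hKRdef]; linarith [hK]
  have hx0 : |X 0 ω| ≤ KR K := by
    have := le_max_right C (|X 0 ω|); simp only [hKRdef]; linarith [hK]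
  have hxH : ∀ s ∈ Set.Icc (0:ℝ) T, ∀ t ∈ Set.Icc (0:ℝ) T,
      |X t ω - X s ω| ≤ KR K * |t - s| ^ α := by
    intro s hs t ht
    refine le_trans (hC s hs t ht) ?_
    exact mul_le_mul_of_nonneg_right hCK (Real.rpow_nonneg (abs_nonneg _) _)
  have hxm : Measurable (fun u => X u ω) := hX.comp measurable_prodMk_right
  -- tail of the series tends to zero
  have hS : ∑' m, B K m ω ≠ ∞ := (hfin K).ne
  have htail : Tendsto (fun M => ∑' n, B K (n + M) ω) atTop (nhds 0) :=
    ENNReal.tendsto_sum_nat_add _ hS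
  rw [Metric.tendsto_atTop]
  intro ε hε
  have hKR0 : (0:ℝ) < KR K := lt_of_lt_of_le one_pos (hKR1 K)
  have hεpos : (0:ℝ≥0∞) < ENNReal.ofReal (ε / (2 * KR K)) :=
    ENNReal.ofReal_pos.2 (by positivity)
  obtain ⟨M, hM⟩ := (htail.eventually (gt_mem_nhds hεpos)).exists_forall_of_atTop
  have hDmpos : (0:ℝ) < ItoAux.Dm T M := by rw [ItoAux.Dm]; positivity
  obtain ⟨N, hN⟩ := (hπ.eventually (gt_mem_nhds hDmpos)).exists_forall_of_atTop
  refine ⟨N, fun n hn => ?_⟩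
  have hmesh : (π n).mesh ≤ ItoAux.Dm T M := (hN n hn).le
  have hkey := ItoAux.key3 hp hq hh hF hT hα (hKR1 K) (le_refl (RK K)) hxm hxH hx0 (π n) M hmesh
  have htsum_eq : (∑' nn : ℕ, (ENNReal.ofReal (ItoAux.Dm T (M + nn) ^ (α - 1)) *
      ∫⁻ s in Set.Ioc 0 T, ItoAux.psi p q (KR K) T α (RK K) (M + nn) ((fun u => X u ω) s))) =
      ∑' nn : ℕ, B K (nn + M) ω := by
    refine tsum_congr (fun nn => ?_)
    rw [hBdef]
    simp only [add_comm M nn]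
  rw [htsum_eq] at hkey
  have hlt : ENNReal.ofReal (2 * KR K) * ∑' nn : ℕ, B K (nn + M) ω <
      ENNReal.ofReal (2 * KR K) * ENNReal.ofReal (ε / (2 * KR K)) := by
    refine ENNReal.mul_lt_mul_right ?_ ENNReal.ofReal_ne_top (hM M (le_refl M))
    simp only [ne_eq, ENNReal.ofReal_eq_zero, not_le]
    positivity
  have heq : ENNReal.ofReal (2 * KR K) * ENNReal.ofReal (ε / (2 * KR K)) =
      ENNReal.ofReal ε := by
    rw [← ENNReal.ofReal_mul (by positivity)]
    congr 1
    field_simp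
  rw [heq] at hlt
  have hfinal := lt_of_le_of_lt hkey hlt
  rw [Real.dist_eq]
  exact (ENNReal.ofReal_lt_ofReal_iff hε).1 hfinal

end
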